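/- Let K and H be subgroups of a topological group G with K strongly neutral. Then the natural map q_K : G/H → K\G/H, defined by q_K(xH) = KxH, is continuous, open, and closed. -/

import Mathlib

open scoped Pointwise

/-- The quotient topology on the double coset space. -/
instance dosetQuotientTopology {G : Type*} [Group G] [TopologicalSpace G] (K H : Set G) :
    TopologicalSpace (DoubleCoset.Quotient K H) :=
  inferInstanceAs (TopologicalSpace (Quotient (DoubleCoset.setoid K H)))

/-- The natural map `q_K : G/H → K\G/H`, sending `xH` to `KxH`. -/
def qK {G : Type*} [Group G] (K H : Subgroup G) :
    G ⧸ H → DoubleCoset.Quotient (K : Set G) (H : Set G) :=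
  Quotient.lift (fun x => DoubleCoset.mk K H x)
    (fun a b h =>
      ((DoubleCoset.eq K H a b).mpr
        ⟨1, K.one_mem, a⁻¹ * b, QuotientGroup.leftRel_apply.mp h, by group⟩))

/-- If `K` is strongly neutral and `F` is closed, then `F * K` is closed. -/
theorem aux_right {G : Type*} [Group G] [TopologicalSpace G] [IsTopologicalGroup G]
    (K : Subgroup G)
    (hK : ∀ O : Set G, IsOpen O → (K : Set G) ⊆ O →
      ∃ V : Set G, IsOpen V ∧ (1 : G) ∈ V ∧ (K : Set G) * V ⊆ O)
    {F : Set G} (hF : IsClosed F) : IsClosed (F * (K : Set G)) := by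
  rw [← isOpen_compl_iff, isOpen_iff_forall_mem_open]
  intro x hx
  have hcl : IsClosed (F⁻¹ * ({x} : Set G)) := by
    rw [Set.mul_singleton]
    exact (Homeomorph.mulRight x).isClosedMap _ hF.inv
  have hKO : (K : Set G) ⊆ (F⁻¹ * ({x} : Set G))ᶜ := by
    intro k hk hmem
    obtain ⟨a, ha, b, hb, hab⟩ := Set.mem_mul.mp hmem
    rw [Set.mem_singleton_iff] at hb
    subst hb
    exact hx (Set.mem_mul.mpr ⟨a⁻¹, Set.inv_mem_inv.mp (by simpa using ha), k, hk, by
      rw [← hab]; group⟩)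
  obtain ⟨V, hVopen, hV1, hKV⟩ := hK _ hcl.isOpen_compl hKO
  refine ⟨x • V⁻¹, ?_, hVopen.inv.smul x, ⟨1, by simpa using hV1, by simp⟩⟩
  rintro y ⟨w, hw, rfl⟩ hyFK
  obtain ⟨f, hf, k, hk, hfk⟩ := Set.mem_mul.mp hyFK
  have h1 : k * w⁻¹ ∈ (K : Set G) * V :=
    Set.mul_mem_mul hk (by simpa using hw)
  apply hKV h1
  have hfk' : f * k = x * w := hfk
  have : k * w⁻¹ = f⁻¹ * x := by
    rw [eq_inv_mul_iff_mul_eq, ← mul_assoc, hfk', mul_inv_cancel_right]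
  rw [this]
  exact Set.mul_mem_mul (Set.inv_mem_inv.mpr hf) rfl

/-- If `K` is strongly neutral and `F` is closed, then `K * F` is closed. -/
theorem aux_left {G : Type*} [Group G] [TopologicalSpace G] [IsTopologicalGroup G]
    (K : Subgroup G)
    (hK : ∀ O : Set G, IsOpen O → (K : Set G) ⊆ O →
      ∃ V : Set G, IsOpen V ∧ (1 : G) ∈ V ∧ (K : Set G) * V ⊆ O)
    {F : Set G} (hF : IsClosed F) : IsClosed ((K : Set G) * F) := by
  have h1 : IsClosed (F⁻¹ * (K : Set G)) := aux_right K hK hF.inv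
  have h2 := h1.inv
  rwa [mul_inv_rev, inv_coe_set, inv_inv] at h2

theorem doset_preimage_eq {G : Type*} [Group G] [TopologicalSpace G] [IsTopologicalGroup G]
    (K H : Subgroup G) (U : Set (G ⧸ H)) :
    DoubleCoset.mk K H ⁻¹' (qK K H '' U) = (K : Set G) * (QuotientGroup.mk ⁻¹' U) := by
  ext x
  constructor
  · rintro ⟨u, huU, hux⟩
    obtain ⟨g, rfl⟩ := QuotientGroup.mk_surjective u
    have : DoubleCoset.mk K H g = DoubleCoset.mk K H x := hux
    obtain ⟨k, hk, h, hh, rfl⟩ := (DoubleCoset.eq K H g x).mp this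
    refine Set.mem_mul.mpr ⟨k, hk, g * h, ?_, by group⟩
    show QuotientGroup.mk (g * h) ∈ U
    rwa [QuotientGroup.mk_mul_of_mem g hh]
  · rintro hx
    obtain ⟨k, hk, w, hw, rfl⟩ := Set.mem_mul.mp hx
    refine ⟨QuotientGroup.mk w, hw, ?_⟩
    show DoubleCoset.mk K H w = DoubleCoset.mk K H (k * w)
    exact (DoubleCoset.eq K H w (k * w)).mpr ⟨k, hk, 1, H.one_mem, by group⟩

theorem doset_isQuotientMap {G : Type*} [Group G] [TopologicalSpace G]
    (K H : Subgroup G) :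
    Topology.IsQuotientMap (DoubleCoset.mk K H : G → DoubleCoset.Quotient (K : Set G) (H : Set G)) :=
  @isQuotientMap_quotient_mk' G _ (DoubleCoset.setoid (K : Set G) (H : Set G))

/-- if `K` is strongly neutral, the natural map
`q_K : G/H → K\G/H` is continuous, open and closed. -/
theorem stmt_7 {G : Type*} [Group G] [TopologicalSpace G] [IsTopologicalGroup G]
    (K H : Subgroup G)
    (hK : ∀ O : Set G, IsOpen O → (K : Set G) ⊆ O →
      ∃ V : Set G, IsOpen V ∧ (1 : G) ∈ V ∧ (K : Set G) * V ⊆ O) :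
    Continuous (qK K H) ∧ IsOpenMap (qK K H) ∧ IsClosedMap (qK K H) := by
  have hπ : Topology.IsQuotientMap (QuotientGroup.mk : G → G ⧸ H) :=
    @isQuotientMap_quotient_mk' G _ (QuotientGroup.leftRel H)
  have hq := doset_isQuotientMap K H
  have hcomp : qK K H ∘ (QuotientGroup.mk : G → G ⧸ H) = DoubleCoset.mk K H := rfl
  refine ⟨?_, ?_, ?_⟩
  · rw [hπ.continuous_iff, hcomp]
    exact hq.continuous
  · intro U hU
    rw [← hq.isOpen_preimage, doset_preimage_eq]
    exact (hπ.continuous.isOpen_preimage U hU).mul_left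
  · intro C hC
    rw [← hq.isClosed_preimage, doset_preimage_eq]
    exact aux_left K hK (hC.preimage hπ.continuous)
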